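/- Existence and uniqueness of the mean value: for every almost periodic function u : ℝ^N → ℝ there exists a unique real constant M(u) such that the constant function with value M(u) belongs to the closure, in the supremum norm, of the convex hull of the set of translates {u(· + a) : a ∈ ℝ^N}. -/

import Mathlib

open BoundedContinuousFunction

/-- The translate `u(· + a)` of a bounded continuous function on `ℝ^N`. -/
noncomputable def RTranslate {N : ℕ} (u : EuclideanSpace ℝ (Fin N) →ᵇ ℝ)
    (a : EuclideanSpace ℝ (Fin N)) : EuclideanSpace ℝ (Fin N) →ᵇ ℝ :=
  u.compContinuous ⟨fun y => y + a, by continuity⟩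

namespace MeanAux

variable {N : ℕ}

local notation "E" => EuclideanSpace ℝ (Fin N)
local notation "B" => EuclideanSpace ℝ (Fin N) →ᵇ ℝ

theorem rt_apply (u : B) (a : E) (x : E) : RTranslate u a x = u (x + a) := rfl

theorem rt_rt (u : B) (a b : E) :
    RTranslate (RTranslate u b) a = RTranslate u (b + a) := by
  ext x; simp [rt_apply, add_assoc, add_comm b a]

theorem rt_zero (u : B) : RTranslate u 0 = u := by ext x; simp [rt_apply]

theorem rt_dist_le (u v : B) (a : E) : dist (RTranslate u a) (RTranslate v a) ≤ dist u v := by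
  simpa [RTranslate] using (lipschitz_compContinuous (β := ℝ)
    ⟨fun y => y + a, by continuity⟩).dist_le_mul u v

theorem rt_const (c : ℝ) (a : E) :
    RTranslate (BoundedContinuousFunction.const _ c) a = BoundedContinuousFunction.const _ c := by
  ext x; rfl

/-- Translation as a linear map. -/
noncomputable def Tlin (a : E) : B →ₗ[ℝ] B where
  toFun v := RTranslate v a
  map_add' v w := by ext x; simp [rt_apply]
  map_smul' r v := by ext x; simp [rt_apply]

theorem Tlin_cont (a : E) : Continuous (Tlin (N := N) a) :=
  continuous_compContinuous _

/-! ### The averaging operator attached to convex-combination data -/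

noncomputable def avg {ι : Type} (t : Finset ι) (w : ι → ℝ) (a : ι → E) (h : B) : B :=
  ∑ i ∈ t, w i • RTranslate h (a i)

theorem avg_apply {ι : Type} (t : Finset ι) (w : ι → ℝ) (a : ι → E) (h : B) (x : E) :
    avg t w a h x = ∑ i ∈ t, w i * h (x + a i) := by
  simp [avg, rt_apply]

theorem avg_const {ι : Type} (t : Finset ι) (w : ι → ℝ) (a : ι → E)
    (hw : ∑ i ∈ t, w i = 1) (c : ℝ) :
    avg t w a (BoundedContinuousFunction.const _ c) = BoundedContinuousFunction.const _ c := by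
  ext x
  simp [avg_apply, ← Finset.sum_mul, hw]

theorem dist_avg_le {ι : Type} (t : Finset ι) (w : ι → ℝ) (a : ι → E)
    (h0 : ∀ i ∈ t, 0 ≤ w i) (hw : ∑ i ∈ t, w i = 1) (h₁ h₂ : B) :
    dist (avg t w a h₁) (avg t w a h₂) ≤ dist h₁ h₂ := by
  refine (BoundedContinuousFunction.dist_le dist_nonneg).2 fun x => ?_
  rw [Real.dist_eq, avg_apply, avg_apply, ← Finset.sum_sub_distrib]
  calc |∑ i ∈ t, (w i * h₁ (x + a i) - w i * h₂ (x + a i))|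
      ≤ ∑ i ∈ t, |w i * h₁ (x + a i) - w i * h₂ (x + a i)| := Finset.abs_sum_le_sum_abs _ _
    _ ≤ ∑ i ∈ t, w i * dist h₁ h₂ := by
        refine Finset.sum_le_sum fun i hi => ?_
        rw [← mul_sub, abs_mul, abs_of_nonneg (h0 i hi)]
        refine mul_le_mul_of_nonneg_left ?_ (h0 i hi)
        rw [← Real.dist_eq]
        exact BoundedContinuousFunction.dist_coe_le_dist _
    _ = dist h₁ h₂ := by rw [← Finset.sum_mul, hw, one_mul]

theorem avg_comm {ι κ : Type} (t : Finset ι) (w : ι → ℝ) (a : ι → E)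
    (s : Finset κ) (v : κ → ℝ) (b : κ → E) (h : B) :
    avg t w a (avg s v b h) = avg s v b (avg t w a h) := by
  ext x
  simp only [avg_apply, Finset.mul_sum]
  rw [Finset.sum_comm]
  refine Finset.sum_congr rfl fun j hj => Finset.sum_congr rfl fun i hi => ?_
  rw [add_right_comm]; ring

/-- Every element of the closed convex hull of translates is an `avg` of `u`
(up to distance `ε`). -/
theorem exists_avg_close (u : B) (f : B)
    (hf : f ∈ convexHull ℝ (Set.range (RTranslate u))) :
    ∃ (ι : Type) (t : Finset ι) (w : ι → ℝ) (a : ι → E),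
      (∀ i ∈ t, 0 ≤ w i) ∧ (∑ i ∈ t, w i = 1) ∧ avg t w a u = f := by
  rw [convexHull_eq] at hf
  obtain ⟨ι, t, w, z, h0, h1, hz, hc⟩ := hf
  have ha : ∀ i, ∃ a : E, i ∈ t → z i = RTranslate u a := by
    intro i
    by_cases hi : i ∈ t
    · obtain ⟨a, haa⟩ := hz i hi
      exact ⟨a, fun _ => haa.symm⟩
    · exact ⟨0, fun h => absurd h hi⟩
  choose a haa using ha
  refine ⟨ι, t, w, a, h0, h1, ?_⟩
  rw [← hc, Finset.centerMass_eq_of_sum_1 _ _ h1]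
  refine Finset.sum_congr rfl fun i hi => ?_
  rw [haa i hi]

/-! ### Oscillation -/

noncomputable def osc (v : B) : ℝ := sSup (Set.range ⇑v) - sInf (Set.range ⇑v)

theorem le_sSup_range (v : B) (x : E) : v x ≤ sSup (Set.range ⇑v) :=
  le_csSup v.isBounded_range.bddAbove ⟨x, rfl⟩

theorem sInf_range_le (v : B) (x : E) : sInf (Set.range ⇑v) ≤ v x :=
  csInf_le v.isBounded_range.bddBelow ⟨x, rfl⟩

theorem osc_nonneg (v : B) : 0 ≤ osc v := by
  have h1 := le_sSup_range v 0
  have h2 := sInf_range_le v 0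
  unfold osc; linarith

theorem sSup_range_le_add (v w : B) :
    sSup (Set.range ⇑v) ≤ sSup (Set.range ⇑w) + dist v w := by
  refine csSup_le (Set.range_nonempty _) ?_
  rintro y ⟨x, rfl⟩
  have h1 : dist (v x) (w x) ≤ dist v w := BoundedContinuousFunction.dist_coe_le_dist x
  rw [Real.dist_eq] at h1
  have h2 := le_sSup_range w x
  have h3 := (abs_le.1 h1).2
  linarith

theorem sInf_range_le_add (v w : B) :
    sInf (Set.range ⇑w) ≤ sInf (Set.range ⇑v) + dist v w := by
  refine sub_le_iff_le_add.mp (le_csInf (Set.range_nonempty _) ?_)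
  rintro y ⟨x, rfl⟩
  have h1 : dist (v x) (w x) ≤ dist v w := BoundedContinuousFunction.dist_coe_le_dist x
  rw [Real.dist_eq] at h1
  have h2 := sInf_range_le w x
  have h3 := (abs_le.1 h1).1
  linarith

theorem osc_lipschitz : LipschitzWith 2 (osc (N := N)) := by
  refine LipschitzWith.of_dist_le_mul fun v w => ?_
  rw [Real.dist_eq]
  have h1 := sSup_range_le_add v w
  have h2 := sSup_range_le_add w v
  have h3 := sInf_range_le_add v w
  have h4 := sInf_range_le_add w v
  have h5 : dist w v = dist v w := dist_comm w v
  rw [abs_le]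
  unfold osc
  constructor <;> [skip; skip] <;> push_cast <;> linarith

theorem osc_continuous : Continuous (osc (N := N)) := osc_lipschitz.continuous

/-! ### The key sets -/

theorem K_convex (u : B) : Convex ℝ (closure (convexHull ℝ (Set.range (RTranslate u)))) :=
  (convex_convexHull ℝ _).closure

theorem K_compact (u : B) (hap : IsCompact (closure (Set.range (RTranslate u)))) :
    IsCompact (closure (convexHull ℝ (Set.range (RTranslate u)))) := by
  have hS : TotallyBounded (Set.range (RTranslate u)) :=
    (hap.totallyBounded).subset subset_closure
  exact TotallyBounded.isCompact_of_isClosed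
    (totallyBounded_convexHull.mpr hS).closure isClosed_closure

theorem K_invariant (u : B) (a : E) (v : B)
    (hv : v ∈ closure (convexHull ℝ (Set.range (RTranslate u)))) :
    RTranslate v a ∈ closure (convexHull ℝ (Set.range (RTranslate u))) := by
  set K := closure (convexHull ℝ (Set.range (RTranslate u))) with hK
  have hsub : K ⊆ (Tlin (N := N) a) ⁻¹' K := by
    have hconv : Convex ℝ ((Tlin (N := N) a) ⁻¹' K) :=
      (K_convex u).linear_preimage _
    have hcl : IsClosed ((Tlin (N := N) a) ⁻¹' K) :=
      isClosed_closure.preimage (Tlin_cont a)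
    have hSsub : Set.range (RTranslate u) ⊆ (Tlin (N := N) a) ⁻¹' K := by
      rintro _ ⟨b, rfl⟩
      show RTranslate (RTranslate u b) a ∈ K
      rw [rt_rt]
      exact subset_closure (subset_convexHull ℝ _ ⟨b + a, rfl⟩)
    calc K ⊆ closure ((Tlin (N := N) a) ⁻¹' K) :=
          closure_mono (convexHull_min hSsub hconv)
      _ = (Tlin (N := N) a) ⁻¹' K := hcl.closure_eq
  exact hsub hv

theorem u_mem_K (u : B) : u ∈ closure (convexHull ℝ (Set.range (RTranslate u))) :=
  subset_closure (subset_convexHull ℝ _ ⟨0, rt_zero u⟩)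

set_option maxHeartbeats 1000000 in
theorem exists_const_mem (u : B)
    (hap : IsCompact (closure (Set.range (RTranslate u)))) :
    ∃ c : ℝ, BoundedContinuousFunction.const (EuclideanSpace ℝ (Fin N)) c ∈
      closure (convexHull ℝ (Set.range (RTranslate u))) := by
  classical
  set K := closure (convexHull ℝ (Set.range (RTranslate u))) with hKdef
  have hKc : IsCompact K := K_compact u hap
  have hKne : K.Nonempty := ⟨u, u_mem_K u⟩
  obtain ⟨v₀, hv₀K, hmin⟩ := hKc.exists_isMinOn hKne osc_continuous.continuousOn
  set m := sInf (Set.range ⇑v₀) with hm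
  set M := sSup (Set.range ⇑v₀) with hM
  have hosc : osc v₀ = 0 := by
    by_contra hne
    have hd : 0 < osc v₀ := lt_of_le_of_ne (osc_nonneg v₀) (Ne.symm hne)
    set d := osc v₀ with hddef
    have hMm : M - m = d := rfl
    -- the translate set of `v₀` is totally bounded
    have hsub : Set.range (fun a : E => RTranslate v₀ a) ⊆ K := by
      rintro _ ⟨a, rfl⟩
      exact K_invariant u a v₀ hv₀K
    have hS' : TotallyBounded (Set.range (fun a : E => RTranslate v₀ a)) :=
      hKc.totallyBounded.subset hsub
    obtain ⟨T, hTsub, hTfin, hcov⟩ := totallyBounded_iff_subset.mp hS'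
      {p : B × B | dist p.1 p.2 < d / 4} (Metric.dist_mem_uniformity (by linarith : (0:ℝ) < d / 4))
    -- T is nonempty
    have hTne : T.Nonempty := by
      have h0 : RTranslate v₀ 0 ∈ Set.range (fun a : E => RTranslate v₀ a) := ⟨0, rfl⟩
      obtain ⟨y, hy, -⟩ := Set.mem_iUnion₂.mp (hcov h0)
      exact ⟨y, hy⟩
    obtain ⟨ft, hftmem⟩ : ∃ ft : Finset (E →ᵇ ℝ), ∀ g, g ∈ ft ↔ g ∈ T :=
      ⟨hTfin.toFinset, fun g => hTfin.mem_toFinset⟩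
    have hkpos : 0 < ft.card := by
      obtain ⟨y, hy⟩ := hTne
      exact Finset.card_pos.mpr ⟨y, (hftmem y).mpr hy⟩
    set k : ℝ := (ft.card : ℝ) with hk
    have hkpos' : (0 : ℝ) < k := by rw [hk]; exact_mod_cast hkpos
    have hk1 : (1 : ℝ) ≤ k := by rw [hk]; exact_mod_cast hkpos
    have hk0 : k ≠ 0 := ne_of_gt hkpos'
    have hkinv : (0 : ℝ) ≤ k⁻¹ := inv_nonneg.mpr hkpos'.le
    -- each element of ft is a translate of v₀, so has the same bounds
    have hbounds : ∀ g ∈ ft, ∀ x : E, m ≤ g x ∧ g x ≤ M := by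
      intro g hg x
      obtain ⟨a, ha⟩ := hTsub ((hftmem g).mp hg)
      rw [← ha, rt_apply]
      exact ⟨sInf_range_le v₀ _, le_sSup_range v₀ _⟩
    -- the average
    set w : B := ∑ g ∈ ft, k⁻¹ • g with hwdef
    have hwK : w ∈ K := by
      refine (K_convex u).sum_mem (fun g _ => hkinv) ?_
        (fun g hg => hsub (hTsub ((hftmem g).mp hg)))
      rw [Finset.sum_const, nsmul_eq_mul, mul_inv_cancel₀ hk0]
    have hwx : ∀ x : E, w x = k⁻¹ * ∑ g ∈ ft, g x := by
      intro x
      rw [hwdef]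
      simp only [BoundedContinuousFunction.coe_sum, Finset.sum_apply,
        BoundedContinuousFunction.coe_smul, Pi.smul_apply, smul_eq_mul, Finset.mul_sum]
    -- lower bound
    have hwlow : ∀ x : E, m ≤ w x := by
      intro x
      rw [hwx]
      have hsum : k * m ≤ ∑ g ∈ ft, g x := by
        have := Finset.card_nsmul_le_sum ft (fun g => g x) m
          (fun g hg => (hbounds g hg x).1)
        rw [nsmul_eq_mul] at this
        exact this
      calc m = k⁻¹ * (k * m) := (inv_mul_cancel_left₀ hk0 m).symm
        _ ≤ k⁻¹ * ∑ g ∈ ft, g x := mul_le_mul_of_nonneg_left hsum hkinv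
    -- upper bound
    have hwup : ∀ x : E, w x ≤ M - d / (2 * k) := by
      intro x
      -- pick b with v₀ b close to the infimum
      obtain ⟨y, ⟨b, rfl⟩, hb⟩ := exists_lt_of_csInf_lt (Set.range_nonempty ⇑v₀)
        (show m < m + d / 4 by linarith)
      -- find g₀ in ft close to the translate by b - x
      have hz : RTranslate v₀ (b - x) ∈ Set.range (fun a : E => RTranslate v₀ a) :=
        ⟨b - x, rfl⟩
      obtain ⟨g₀, hg₀T, hg₀d⟩ := Set.mem_iUnion₂.mp (hcov hz)
      have hg₀ft : g₀ ∈ ft := (hftmem g₀).mpr hg₀T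
      have hg₀d' : dist (RTranslate v₀ (b - x)) g₀ < d / 4 := hg₀d
      have hptd : dist (RTranslate v₀ (b - x) x) (g₀ x) ≤ dist (RTranslate v₀ (b - x)) g₀ :=
        BoundedContinuousFunction.dist_coe_le_dist x
      have hxb : x + (b - x) = b := by abel
      have hval : RTranslate v₀ (b - x) x = v₀ b := by rw [rt_apply, hxb]
      have hg₀x : g₀ x < m + d / 2 := by
        rw [hval, Real.dist_eq] at hptd
        have := (abs_le.1 (hptd)).1
        linarith [lt_of_le_of_lt hptd hg₀d']
      -- sum estimate
      have hsum : ∑ g ∈ ft, g x ≤ (m + d / 2) + (k - 1) * M := by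
        rw [← Finset.add_sum_erase ft (fun g => g x) hg₀ft]
        have h1 : ∑ g ∈ ft.erase g₀, g x ≤ (ft.erase g₀).card • M :=
          Finset.sum_le_card_nsmul _ _ _
            (fun g hg => (hbounds g (Finset.mem_of_mem_erase hg) x).2)
        rw [Finset.card_erase_of_mem hg₀ft, nsmul_eq_mul,
          Nat.cast_sub (Nat.one_le_iff_ne_zero.mpr hkpos.ne')] at h1
        push_cast at h1 ⊢
        have := le_of_lt hg₀x
        linarith
      rw [hwx]
      have h2 : k⁻¹ * ∑ g ∈ ft, g x ≤ k⁻¹ * ((m + d / 2) + (k - 1) * M) :=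
        mul_le_mul_of_nonneg_left hsum hkinv
      refine h2.trans (le_of_eq ?_)
      have hmd : m = M - d := by linarith
      rw [hmd]
      field_simp
      ring
    -- oscillation of w
    have hoscw : osc w ≤ d - d / (2 * k) := by
      have hsup : sSup (Set.range ⇑w) ≤ M - d / (2 * k) := by
        refine csSup_le (Set.range_nonempty _) ?_
        rintro y ⟨x, rfl⟩
        exact hwup x
      have hinf : m ≤ sInf (Set.range ⇑w) := by
        refine le_csInf (Set.range_nonempty _) ?_
        rintro y ⟨x, rfl⟩
        exact hwlow x
      unfold osc
      linarith
    have hcontra := hmin hwK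
    have hpos : 0 < d / (2 * k) := div_pos hd (by linarith)
    simp only [← hddef] at hcontra
    -- hcontra : d ≤ osc w
    have : d ≤ d - d / (2 * k) := le_trans hcontra hoscw
    linarith
  -- v₀ is constant
  refine ⟨v₀ 0, ?_⟩
  have hconst : BoundedContinuousFunction.const (EuclideanSpace ℝ (Fin N)) (v₀ 0) = v₀ := by
    ext x
    have h1 := le_sSup_range v₀ x
    have h2 := sInf_range_le v₀ x
    have h3 := le_sSup_range v₀ 0
    have h4 := sInf_range_le v₀ 0
    have h5 : M - m = 0 := hosc
    show v₀ 0 = v₀ x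
    linarith
  rw [hconst]
  exact hv₀K

theorem unique_const (u : B) {c c' : ℝ}
    (hc : BoundedContinuousFunction.const (EuclideanSpace ℝ (Fin N)) c ∈
      closure (convexHull ℝ (Set.range (RTranslate u))))
    (hc' : BoundedContinuousFunction.const (EuclideanSpace ℝ (Fin N)) c' ∈
      closure (convexHull ℝ (Set.range (RTranslate u)))) : c = c' := by
  have key : ∀ ε : ℝ, 0 < ε → |c - c'| ≤ 2 * ε := by
    intro ε hε
    obtain ⟨f, hfmem, hfd⟩ := Metric.mem_closure_iff.mp hc ε hε
    obtain ⟨g, hgmem, hgd⟩ := Metric.mem_closure_iff.mp hc' ε hε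
    obtain ⟨ι, t, wt, a, ht0, ht1, hfa⟩ := exists_avg_close u f hfmem
    obtain ⟨κ, s, vs, b, hs0, hs1, hgb⟩ := exists_avg_close u g hgmem
    -- the two averaging operators commute on u
    have hcomm : avg t wt a g = avg s vs b f := by
      rw [← hfa, ← hgb, avg_comm]
    have h1 : dist (BoundedContinuousFunction.const (EuclideanSpace ℝ (Fin N)) c)
        (avg s vs b f) ≤ ε := by
      calc dist (BoundedContinuousFunction.const (EuclideanSpace ℝ (Fin N)) c) (avg s vs b f)
          = dist (avg s vs b (BoundedContinuousFunction.const (EuclideanSpace ℝ (Fin N)) c))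
            (avg s vs b f) := by rw [avg_const s vs b hs1]
        _ ≤ dist (BoundedContinuousFunction.const (EuclideanSpace ℝ (Fin N)) c) f :=
            dist_avg_le s vs b hs0 hs1 _ _
        _ ≤ ε := le_of_lt hfd
    have h2 : dist (avg t wt a g)
        (BoundedContinuousFunction.const (EuclideanSpace ℝ (Fin N)) c') ≤ ε := by
      calc dist (avg t wt a g) (BoundedContinuousFunction.const (EuclideanSpace ℝ (Fin N)) c')
          = dist (avg t wt a g)
            (avg t wt a (BoundedContinuousFunction.const (EuclideanSpace ℝ (Fin N)) c')) := by
              rw [avg_const t wt a ht1]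
        _ ≤ dist g (BoundedContinuousFunction.const (EuclideanSpace ℝ (Fin N)) c') :=
            dist_avg_le t wt a ht0 ht1 _ _
        _ ≤ ε := by rw [dist_comm] at hgd; exact le_of_lt hgd
    have h3 : dist (BoundedContinuousFunction.const (EuclideanSpace ℝ (Fin N)) c)
        (BoundedContinuousFunction.const (EuclideanSpace ℝ (Fin N)) c') ≤ 2 * ε := by
      calc dist (BoundedContinuousFunction.const (EuclideanSpace ℝ (Fin N)) c)
            (BoundedContinuousFunction.const (EuclideanSpace ℝ (Fin N)) c')
          ≤ dist (BoundedContinuousFunction.const (EuclideanSpace ℝ (Fin N)) c) (avg s vs b f)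
            + dist (avg s vs b f)
              (BoundedContinuousFunction.const (EuclideanSpace ℝ (Fin N)) c') :=
            dist_triangle _ _ _
        _ ≤ ε + ε := by
            refine add_le_add h1 ?_
            rw [← hcomm]
            exact h2
        _ = 2 * ε := by ring
    have h4 : dist c c' ≤ dist (BoundedContinuousFunction.const (EuclideanSpace ℝ (Fin N)) c)
        (BoundedContinuousFunction.const (EuclideanSpace ℝ (Fin N)) c') := by
      have := BoundedContinuousFunction.dist_coe_le_dist
        (f := BoundedContinuousFunction.const (EuclideanSpace ℝ (Fin N)) c)
        (g := BoundedContinuousFunction.const (EuclideanSpace ℝ (Fin N)) c') (0 : E)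
      simpa using this
    rw [← Real.dist_eq]
    exact h4.trans h3
  by_contra hne
  have habs : 0 < |c - c'| := abs_pos.mpr (sub_ne_zero.mpr hne)
  have := key (|c - c'| / 4) (by linarith)
  linarith

end MeanAux

/-- for every almost periodic `u : ℝ^N → ℝ` there is a unique constant
`M(u)` such that the constant function with value `M(u)` lies in the sup-norm closure
of the convex hull of the set of translates of `u`. -/
theorem mean_value_existsUnique {N : ℕ} (hN : 0 < N)
    (u : EuclideanSpace ℝ (Fin N) →ᵇ ℝ)
    (hap : IsCompact (closure (Set.range (RTranslate u)))) :
    ∃! c : ℝ, BoundedContinuousFunction.const (EuclideanSpace ℝ (Fin N)) c ∈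
      closure (convexHull ℝ (Set.range (RTranslate u))) := by
  obtain ⟨c, hc⟩ := MeanAux.exists_const_mem u hap
  exact ⟨c, hc, fun c' hc' => MeanAux.unique_const u hc' hc⟩
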